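/- arXiv:2605.04405 — 4 statements merged into one kernel-verified Lean document; each statement's English description precedes it below -/
import Mathlib

section
/- Let E be a real inner product space, G : E → E, g ∈ E, ε ≥ 0 with ε ≤ ‖g‖ and ‖G(x) − g‖ ≤ ε for all x ∈ E. Let q, p : ℝ → E be differentiable with p(0) = 0 and p'(t) = −G(q(t)) for all t. Then for every t ≥ 0, ‖p(t)‖ ≥ (‖g‖ − ε)·t, and consequently the kinetic energy satisfies (1/2)‖p(t)‖² ≥ (1/2)·(‖g‖ − ε)²·t². -/
/-- Quadratic lower bound on kinetic energy for a sample started at rest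
on a region where the gradient field stays within `ε` of a vector `g` with `ε ≤ ‖g‖`. -/
theorem kinetic_lower_bound {E : Type*} [NormedAddCommGroup E] [InnerProductSpace ℝ E]
    (G : E → E) (g : E) (ε : ℝ) (hε : 0 ≤ ε) (hεg : ε ≤ ‖g‖)
    (hG : ∀ x : E, ‖G x - g‖ ≤ ε)
    (q p : ℝ → E) (hq : Differentiable ℝ q)
    (hp0 : p 0 = 0) (hp : ∀ t : ℝ, HasDerivAt p (-G (q t)) t) :
    ∀ t : ℝ, 0 ≤ t →
      (‖g‖ - ε) * t ≤ ‖p t‖ ∧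
      (1 / 2) * (‖g‖ - ε) ^ 2 * t ^ 2 ≤ (1 / 2) * ‖p t‖ ^ 2 := by
  intro t ht
  have hc : 0 ≤ ‖g‖ - ε := sub_nonneg.2 hεg
  have main : (‖g‖ - ε) * t ≤ ‖p t‖ := by
    rcases eq_or_lt_of_le hεg with heq | hlt
    · simp [← heq]
    · have hg0 : g ≠ 0 := by
        intro h; rw [h, norm_zero] at hlt; linarith
      have hng : (0:ℝ) < ‖g‖ := norm_pos_iff.2 hg0
      set u : E := ‖g‖⁻¹ • g with hu
      have hnu : ‖u‖ = 1 := by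
        rw [hu, norm_smul, norm_inv, norm_norm, inv_mul_cancel₀ (ne_of_gt hng)]
      set L : E →L[ℝ] ℝ := innerSL ℝ (-u) with hL
      set φ : ℝ → ℝ := fun s => L (p s) with hφ
      have hφd : ∀ s, HasDerivAt φ (L (-G (q s))) s := fun s =>
        (L.hasFDerivAt.comp_hasDerivAt s (hp s))
      have hlow : ∀ s : ℝ, ‖g‖ - ε ≤ L (-G (q s)) := by
        intro s
        have h1 : L (-G (q s)) = inner ℝ u (G (q s)) := by
          simp [hL]
        have h2 : (inner ℝ u (G (q s)) : ℝ) = inner ℝ u g + inner ℝ u (G (q s) - g) := by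
          rw [← inner_add_right]; congr 1; abel
        have h3 : (inner ℝ u g : ℝ) = ‖g‖ := by
          rw [hu, inner_smul_left, real_inner_self_eq_norm_sq]
          field_simp
          simp [hng.ne']
        have h4 : -ε ≤ (inner ℝ u (G (q s) - g) : ℝ) := by
          have := abs_real_inner_le_norm u (G (q s) - g)
          have h5 := hG (q s)
          rw [hnu, one_mul] at this
          have := neg_abs_le (inner ℝ u (G (q s) - g) : ℝ)
          nlinarith [abs_nonneg (inner ℝ u (G (q s) - g) : ℝ)]
        rw [h1, h2, h3]; linarith
      -- ψ monotone
      set ψ : ℝ → ℝ := fun s => φ s - (‖g‖ - ε) * s with hψ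
      have hψd : ∀ s, HasDerivAt ψ (L (-G (q s)) - (‖g‖ - ε)) s := fun s =>
        (hφd s).sub ((hasDerivAt_id s).const_mul (‖g‖ - ε) |>.congr_deriv (by ring))
      have hmono : Monotone ψ := by
        apply monotone_of_deriv_nonneg
        · exact fun s => ((hψd s).differentiableAt)
        · intro s
          rw [(hψd s).deriv]
          have := hlow s
          linarith
      have h0 : ψ 0 = 0 := by simp [hψ, hφ, hp0]
      have hψt : 0 ≤ ψ t := h0 ▸ hmono ht
      have hφt : (‖g‖ - ε) * t ≤ φ t := by
        simp only [hψ] at hψt; linarith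
      have hcs : φ t ≤ ‖p t‖ := by
        have := real_inner_le_norm (-u) (p t)
        simpa [hφ, hL, hnu] using this
      linarith
  refine ⟨main, ?_⟩
  nlinarith [norm_nonneg (p t), mul_nonneg hc ht]
end

section
/- Let E be a complete real inner product space, q₀ ∈ E, λ > 0, and let V : E → ℝ be differentiable with V(x) ≥ (λ/2)‖x − q₀‖² for all x ∈ E. Let q, p : ℝ → E be differentiable with q'(t) = p(t) and p'(t) = −∇V(q(t)) for all t. Then for every t ∈ ℝ, ‖q(t) − q₀‖² ≤ (2/λ)·((1/2)‖p(0)‖² + V(q(0))). -/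
/-- Confinement in a quadratically coercive potential basin: the
displacement from the basin center is bounded via the initial total energy. -/
theorem basin_confinement {E : Type*} [NormedAddCommGroup E] [InnerProductSpace ℝ E]
    [CompleteSpace E]
    (q₀ : E) (lam : ℝ) (hlam : 0 < lam)
    (V : E → ℝ) (hV : Differentiable ℝ V)
    (hVcoercive : ∀ x : E, (lam / 2) * ‖x - q₀‖ ^ 2 ≤ V x)
    (q p : ℝ → E)
    (hq : ∀ t : ℝ, HasDerivAt q (p t) t)
    (hp : ∀ t : ℝ, HasDerivAt p (-gradient V (q t)) t) :
    ∀ t : ℝ, ‖q t - q₀‖ ^ 2 ≤ (2 / lam) * ((1 / 2) * ‖p 0‖ ^ 2 + V (q 0)) := by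
  intro t
  set H : ℝ → ℝ := fun s => (1 / 2) * ‖p s‖ ^ 2 + V (q s) with hH
  have hderiv : ∀ s : ℝ, HasDerivAt H 0 s := by
    intro s
    have h1 : HasDerivAt (fun s => ‖p s‖ ^ 2)
        (2 * inner ℝ (p s) (-gradient V (q s)) : ℝ) s := by
      have := (hp s).norm_sq
      simpa [mul_comm] using this
    have h2 : HasDerivAt (fun s => V (q s))
        (inner ℝ (gradient V (q s)) (p s) : ℝ) s := by
      have hg : HasGradientAt V (gradient V (q s)) (q s) :=
        (hV (q s)).hasGradientAt
      have := hg.hasFDerivAt.comp_hasDerivAt s (hq s)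
      simpa [InnerProductSpace.toDual_apply_apply, Function.comp_def] using this
    have := (h1.const_mul (1 / 2 : ℝ)).add h2
    rw [show (0 : ℝ) = 1 / 2 * (2 * inner ℝ (p s) (-gradient V (q s))) + inner ℝ (gradient V (q s)) (p s) by
      simp [real_inner_comm (p s) (gradient V (q s)), inner_neg_right]]
    exact this
  have hconst : H t = H 0 := by
    have : ∀ s : ℝ, H s = H 0 := fun s =>
      is_const_of_deriv_eq_zero (fun u => (hderiv u).differentiableAt)
        (fun u => (hderiv u).deriv) s 0
    exact this t
  have h1 : (lam / 2) * ‖q t - q₀‖ ^ 2 ≤ H t := by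
    have := hVcoercive (q t)
    have hp2 : (0 : ℝ) ≤ (1 / 2) * ‖p t‖ ^ 2 := by positivity
    simp only [hH]; linarith
  rw [hconst] at h1
  have hlam' : (0 : ℝ) < lam / 2 := by linarith
  calc ‖q t - q₀‖ ^ 2 = (2 / lam) * ((lam / 2) * ‖q t - q₀‖ ^ 2) := by
        field_simp
    _ ≤ (2 / lam) * H 0 := by
        apply mul_le_mul_of_nonneg_left h1 (by positivity)
end

section
/- Let d be a natural number, η ∈ ℝ, let F : (Fin d → ℝ) → (Fin d → ℝ) be measurable, and let A : (Fin d → ℝ) →ₗ (Fin d → ℝ) be a linear map. Then the symplectic Euler map Φ : ((Fin d → ℝ) × (Fin d → ℝ)) → ((Fin d → ℝ) × (Fin d → ℝ)) defined by Φ(q, p) = (q + η • A(p − η • F(q)), p − η • F(q)) preserves the product Lebesgue (volume) measure on (Fin d → ℝ) × (Fin d → ℝ). -/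
open MeasureTheory

/-- The symplectic Euler map (kick followed by drift) preserves the
product Lebesgue measure on phase space (Liouville-type volume preservation). -/
theorem symplectic_euler_measure_preserving (d : ℕ) (η : ℝ)
    (F : (Fin d → ℝ) → (Fin d → ℝ)) (hF : Measurable F)
    (A : (Fin d → ℝ) →ₗ[ℝ] (Fin d → ℝ)) :
    MeasurePreserving
      (fun qp : (Fin d → ℝ) × (Fin d → ℝ) =>
        (qp.1 + η • A (qp.2 - η • F qp.1), qp.2 - η • F qp.1))
      volume volume := by
  have hA : Continuous A := A.continuous_of_finiteDimensional
  have hvol : (volume : Measure ((Fin d → ℝ) × (Fin d → ℝ)))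
      = (volume : Measure (Fin d → ℝ)).prod volume := Measure.volume_eq_prod _ _
  -- kick : (q, p) ↦ (q, p - η • F q)
  have hkick : MeasurePreserving
      (fun qp : (Fin d → ℝ) × (Fin d → ℝ) => (qp.1, qp.2 - η • F qp.1))
      ((volume : Measure (Fin d → ℝ)).prod volume) (volume.prod volume) := by
    refine (MeasurePreserving.id volume).skew_product
      (g := fun q p => p - η • F q) ?_ (Filter.Eventually.of_forall fun q => ?_)
    · exact measurable_snd.sub ((hF.comp measurable_fst).const_smul η)
    · have := (measurePreserving_add_right (volume : Measure (Fin d → ℝ))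
        (-(η • F q))).map_eq
      simpa [sub_eq_add_neg] using this
  -- half drift : (p, q) ↦ (p, q + η • A p)
  have hhalf : MeasurePreserving
      (fun pq : (Fin d → ℝ) × (Fin d → ℝ) => (pq.1, pq.2 + η • A pq.1))
      ((volume : Measure (Fin d → ℝ)).prod volume) (volume.prod volume) := by
    refine (MeasurePreserving.id volume).skew_product
      (g := fun p q => q + η • A p) ?_ (Filter.Eventually.of_forall fun p => ?_)
    · exact measurable_snd.add
        (((hA.measurable).comp measurable_fst).const_smul η)
    · exact (measurePreserving_add_right (volume : Measure (Fin d → ℝ)) (η • A p)).map_eq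
  have hswap : MeasurePreserving (Prod.swap : ((Fin d → ℝ) × (Fin d → ℝ)) → (Fin d → ℝ) × (Fin d → ℝ))
      ((volume : Measure (Fin d → ℝ)).prod volume) (volume.prod volume) :=
    Measure.measurePreserving_swap
  -- drift = swap ∘ half ∘ swap
  have hdrift : MeasurePreserving
      (fun qp : (Fin d → ℝ) × (Fin d → ℝ) => (qp.1 + η • A qp.2, qp.2))
      ((volume : Measure (Fin d → ℝ)).prod volume) (volume.prod volume) := by
    have := (hswap.comp hhalf).comp hswap
    simpa [Function.comp_def] using this
  rw [hvol]
  exact hdrift.comp hkick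
end

section
/- Let E be a finite-dimensional real inner product space, η ∈ ℝ, let A : E →ₗ E be a linear map, let F : E → E be differentiable at q₀ ∈ E, and define Φ : E × E → E × E by Φ(q, p) = (q + η • A(p − η • F(q)), p − η • F(q)). Then Φ is differentiable at (q₀, p₀) for every p₀ ∈ E, and the determinant of its Fréchet derivative at (q₀, p₀), viewed as a linear endomorphism of E × E, equals 1. -/
open LinearMap

lemma det_shear_up {E : Type*} [NormedAddCommGroup E] [InnerProductSpace ℝ E]
    [FiniteDimensional ℝ E] (L : E →ₗ[ℝ] E) :
    LinearMap.det ((LinearMap.id : E × E →ₗ[ℝ] E × E)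
      + (LinearMap.inl ℝ E E).comp (L.comp (LinearMap.snd ℝ E E))) = 1 := by
  classical
  let b := Module.finBasis ℝ E
  rw [← LinearMap.det_toMatrix (b.prod b)]
  have : LinearMap.toMatrix (b.prod b) (b.prod b)
      ((LinearMap.id : E × E →ₗ[ℝ] E × E)
        + (LinearMap.inl ℝ E E).comp (L.comp (LinearMap.snd ℝ E E)))
      = Matrix.fromBlocks 1 (LinearMap.toMatrix b b L) 0 1 := by
    ext i j
    cases i <;> cases j <;>
      simp [LinearMap.toMatrix_apply, Module.Basis.prod_apply, Matrix.one_apply,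
        Finsupp.single_apply, Sum.inl.injEq, eq_comm]
  rw [this, Matrix.det_fromBlocks_zero₂₁]
  simp

lemma det_shear_down {E : Type*} [NormedAddCommGroup E] [InnerProductSpace ℝ E]
    [FiniteDimensional ℝ E] (L : E →ₗ[ℝ] E) :
    LinearMap.det ((LinearMap.id : E × E →ₗ[ℝ] E × E)
      + (LinearMap.inr ℝ E E).comp (L.comp (LinearMap.fst ℝ E E))) = 1 := by
  classical
  let b := Module.finBasis ℝ E
  rw [← LinearMap.det_toMatrix (b.prod b)]
  have : LinearMap.toMatrix (b.prod b) (b.prod b)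
      ((LinearMap.id : E × E →ₗ[ℝ] E × E)
        + (LinearMap.inr ℝ E E).comp (L.comp (LinearMap.fst ℝ E E)))
      = Matrix.fromBlocks 1 0 (LinearMap.toMatrix b b L) 1 := by
    ext i j
    cases i <;> cases j <;>
      simp [LinearMap.toMatrix_apply, Module.Basis.prod_apply, Matrix.one_apply,
        Finsupp.single_apply, eq_comm]
  rw [this, Matrix.det_fromBlocks_zero₁₂]
  simp

/-- The symplectic Euler map (constant-mass case) has unit Jacobian
determinant: its Fréchet derivative at any point is a linear endomorphism of
`E × E` with determinant 1. -/
theorem symplectic_euler_jacobian_det_one {E : Type*} [NormedAddCommGroup E]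
    [InnerProductSpace ℝ E] [FiniteDimensional ℝ E]
    (η : ℝ) (A : E →ₗ[ℝ] E) (F : E → E) (q₀ : E)
    (hF : DifferentiableAt ℝ F q₀) :
    ∀ p₀ : E,
      DifferentiableAt ℝ
        (fun qp : E × E => (qp.1 + η • A (qp.2 - η • F qp.1), qp.2 - η • F qp.1))
        (q₀, p₀) ∧
      LinearMap.det
        ((fderiv ℝ
          (fun qp : E × E => (qp.1 + η • A (qp.2 - η • F qp.1), qp.2 - η • F qp.1))
          (q₀, p₀)).toLinearMap) = 1 := by
  intro p₀
  set H : E →L[ℝ] E := fderiv ℝ F q₀ with hH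
  let A' : E →L[ℝ] E := LinearMap.toContinuousLinearMap A
  -- drift (continuous linear)
  let T : E × E →L[ℝ] E × E :=
    ((ContinuousLinearMap.fst ℝ E E) + η • A'.comp (ContinuousLinearMap.snd ℝ E E)).prod
      (ContinuousLinearMap.snd ℝ E E)
  -- kick derivative
  let K : E × E →L[ℝ] E × E :=
    (ContinuousLinearMap.fst ℝ E E).prod
      ((ContinuousLinearMap.snd ℝ E E) - η • H.comp (ContinuousLinearMap.fst ℝ E E))
  have hG : HasFDerivAt (fun qp : E × E => (qp.1, qp.2 - η • F qp.1)) K (q₀, p₀) := by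
    apply HasFDerivAt.prodMk (hasFDerivAt_fst)
    exact (hasFDerivAt_snd).sub ((hF.hasFDerivAt.comp _ hasFDerivAt_fst).const_smul η)
  have hΦ : HasFDerivAt
      (fun qp : E × E => (qp.1 + η • A (qp.2 - η • F qp.1), qp.2 - η • F qp.1))
      (T.comp K) (q₀, p₀) := by
    have := (T.hasFDerivAt (x := ((q₀, p₀).1, (q₀, p₀).2 - η • F (q₀, p₀).1))).comp (q₀, p₀) hG
    exact this
  refine ⟨hΦ.differentiableAt, ?_⟩
  rw [hΦ.fderiv]
  have hcomp : (T.comp K).toLinearMap = T.toLinearMap.comp K.toLinearMap := rfl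
  rw [hcomp, LinearMap.det_comp]
  have hT : (T.toLinearMap : E × E →ₗ[ℝ] E × E)
      = (LinearMap.id : E × E →ₗ[ℝ] E × E)
        + (LinearMap.inl ℝ E E).comp ((η • A).comp (LinearMap.snd ℝ E E)) := by
    refine LinearMap.ext fun x => ?_
    simp [T, A', Prod.ext_iff]
  have hK : (K.toLinearMap : E × E →ₗ[ℝ] E × E)
      = (LinearMap.id : E × E →ₗ[ℝ] E × E)
        + (LinearMap.inr ℝ E E).comp (((-η) • (H : E →ₗ[ℝ] E)).comp (LinearMap.fst ℝ E E)) := by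
    refine LinearMap.ext fun x => ?_
    simp [K, Prod.ext_iff, sub_eq_add_neg]
  rw [hT, hK, det_shear_up, det_shear_down, mul_one]
end
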